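/- Let Q₀ be an M×M complex matrix, Q an M×P complex matrix, and S an M×N complex matrix. Set W := Q₀ − Q Q† and suppose I_N + S† W S is invertible. Then Q₀ − [Q₀ S, Q] · [[I_N + S† Q₀ S, S† Q], [Q† S, I_P]]^{-1} · [S† Q₀; Q†] = W − W S (I_N + S† W S)^{-1} S† W, where [Q₀ S, Q] is the M×(N+P) matrix with blocks Q₀S and Q, and [S† Q₀; Q†] is its conjugate-transpose-style counterpart (the (N+P)×M matrix with blocks S†Q₀ and Q†). -/

import Mathlib

open scoped ComplexOrder Matrix

/-- Schur-complement reduction: with `W = Q₀ - Q Qᴴ` and `I + Sᴴ W S` invertible,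
`Q₀ - [Q₀S, Q] [[I + Sᴴ Q₀ S, Sᴴ Q], [Qᴴ S, I]]⁻¹ [Sᴴ Q₀; Qᴴ]
  = W - W S (I + Sᴴ W S)⁻¹ Sᴴ W`. -/
theorem schur_reduction {M N P : ℕ} (Q₀ : Matrix (Fin M) (Fin M) ℂ)
    (Q : Matrix (Fin M) (Fin P) ℂ) (S : Matrix (Fin M) (Fin N) ℂ)
    (hW : IsUnit ((1 : Matrix (Fin N) (Fin N) ℂ) + Sᴴ * (Q₀ - Q * Qᴴ) * S)) :
    Q₀ - Matrix.fromCols (Q₀ * S) Q *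
        (Matrix.fromBlocks ((1 : Matrix (Fin N) (Fin N) ℂ) + Sᴴ * Q₀ * S) (Sᴴ * Q)
          (Qᴴ * S) (1 : Matrix (Fin P) (Fin P) ℂ))⁻¹ *
        Matrix.fromRows (Sᴴ * Q₀) Qᴴ
      = (Q₀ - Q * Qᴴ) -
        (Q₀ - Q * Qᴴ) * S * ((1 : Matrix (Fin N) (Fin N) ℂ) + Sᴴ * (Q₀ - Q * Qᴴ) * S)⁻¹ *
          Sᴴ * (Q₀ - Q * Qᴴ) := by
  obtain ⟨iW⟩ := hW.nonempty_invertible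
  letI := iW
  letI : Invertible (1 : Matrix (Fin P) (Fin P) ℂ) := invertibleOne
  have hsc : ((1 : Matrix (Fin N) (Fin N) ℂ) + Sᴴ * Q₀ * S) -
      (Sᴴ * Q) * ⅟(1 : Matrix (Fin P) (Fin P) ℂ) * (Qᴴ * S)
      = 1 + Sᴴ * (Q₀ - Q * Qᴴ) * S := by
    rw [invOf_one, Matrix.mul_one]
    simp only [Matrix.mul_sub, Matrix.sub_mul, Matrix.mul_assoc]
    abel
  letI iSC : Invertible (((1 : Matrix (Fin N) (Fin N) ℂ) + Sᴴ * Q₀ * S) -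
      (Sᴴ * Q) * ⅟(1 : Matrix (Fin P) (Fin P) ℂ) * (Qᴴ * S)) := hsc ▸ iW
  letI := Matrix.fromBlocks₂₂Invertible ((1 : Matrix (Fin N) (Fin N) ℂ) + Sᴴ * Q₀ * S)
    (Sᴴ * Q) (Qᴴ * S) (1 : Matrix (Fin P) (Fin P) ℂ)
  have hinv : ⅟(((1 : Matrix (Fin N) (Fin N) ℂ) + Sᴴ * Q₀ * S) -
      (Sᴴ * Q) * ⅟(1 : Matrix (Fin P) (Fin P) ℂ) * (Qᴴ * S))
      = ((1 : Matrix (Fin N) (Fin N) ℂ) + Sᴴ * (Q₀ - Q * Qᴴ) * S)⁻¹ := by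
    rw [Matrix.invOf_eq_nonsing_inv, hsc]
  rw [← Matrix.invOf_eq_nonsing_inv, Matrix.invOf_fromBlocks₂₂_eq, hinv]
  set K := ((1 : Matrix (Fin N) (Fin N) ℂ) + Sᴴ * (Q₀ - Q * Qᴴ) * S)⁻¹ with hK
  rw [Matrix.fromCols_mul_fromBlocks, Matrix.fromCols_mul_fromRows]
  simp only [invOf_one, Matrix.mul_one, Matrix.one_mul, Matrix.mul_neg, Matrix.neg_mul,
    Matrix.mul_sub, Matrix.sub_mul, Matrix.mul_add, Matrix.add_mul, Matrix.mul_assoc]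
  abel
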